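/- arXiv:2506.09437 — 4 statements merged into one kernel-verified Lean document; each statement's English description precedes it below -/
import Mathlib

section
/- Let f be a probability density on [0,1) and let I be a nested binary partition of [0,1). Define c_∅ = inf_{[0,1)} f and, for each binary string x_{1:n}, c_{x_{1:n}} = inf_{I_{x_{1:n}}} f − inf_{I_{x_{1:n-1}}} f. Then for every x ∈ [0,1) with digit sequence (x_1, x_2, ...), the telescoping identity Σ_{n=0}^∞ c_{x_{1:n}} = lim_{n→∞} inf_{I_{x_{1:n}}} f holds, and if f is lower semicontinuous at x then this limit equals f(x); consequently Σ_{n=0}^∞ c_{x_{1:n}} = f(x) for every point x of lower semicontinuity, and in that case the function (x,n) ↦ c_{x_{1:n}} defines a probability density with respect to the product of Lebesgue measure on [0,1) and counting measure on ℕ₀. -/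
open Filter Set MeasureTheory

/-- Prefix of length `n` of an infinite binary sequence. -/
def pre (y : ℕ → Bool) (n : ℕ) : List Bool := List.ofFn (fun i : Fin n => y i)

/-- For a probability density `f` on `[0,1)` and a nested binary partition `I`
with lengths tending to `0` along every digit sequence, set
`c_{x_{1:n}} = inf_{I_{x_{1:n}}} f − inf_{I_{x_{1:n-1}}} f` (with `c_∅ = inf_{[0,1)} f`).
Then for every `x` with digit sequence `(x_1, x_2, …)`, the telescoping identity
`Σ_{n} c_{x_{1:n}} = lim_n inf_{I_{x_{1:n}}} f  (= ⨆_n inf_{I_{x_{1:n}}} f)` holds; if `f` is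
lower semicontinuous at `x` (within `[0,1)`) this sum equals `f x`; and if `f` is lower
semicontinuous almost everywhere, then `(x,n) ↦ c_{x_{1:n}}` is a probability density with
respect to Lebesgue × counting measure, i.e. its total (Tonelli) integral is `1`. -/
theorem stmt_4
    (a ℓ : List Bool → ℝ)
    (ha0 : a [] = 0) (hl0 : ℓ [] = 1)
    (hpos : ∀ s, 0 < ℓ s)
    (haf : ∀ s, a (s ++ [false]) = a s)
    (hat : ∀ s, a (s ++ [true]) = a s + ℓ (s ++ [false]))
    (hll : ∀ s, ℓ s = ℓ (s ++ [false]) + ℓ (s ++ [true]))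
    (hlen : ∀ y : ℕ → Bool, Tendsto (fun n => ℓ (pre y n)) atTop (nhds 0))
    (f : ℝ → ℝ) (hf : Measurable f) (hf0 : ∀ x, 0 ≤ f x)
    (hf1 : ∫ x in Set.Ico (0 : ℝ) 1, f x = 1)
    -- the term `c_{x_{1:n}}` along a digit sequence `y`, with `c_∅` for `n = 0`
    (term : (ℕ → Bool) → ℕ → ℝ)
    (hterm : ∀ y n, term y n =
      sInf (f '' Set.Ico (a (pre y n)) (a (pre y n) + ℓ (pre y n))) -
        (if n = 0 then 0 else
          sInf (f '' Set.Ico (a (pre y (n - 1))) (a (pre y (n - 1)) + ℓ (pre y (n - 1)))))) :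
    (∀ x ∈ Set.Ico (0 : ℝ) 1, ∀ y : ℕ → Bool,
      (∀ n, x ∈ Set.Ico (a (pre y n)) (a (pre y n) + ℓ (pre y n))) →
      HasSum (term y)
          (⨆ n, sInf (f '' Set.Ico (a (pre y n)) (a (pre y n) + ℓ (pre y n)))) ∧
      (LowerSemicontinuousWithinAt f (Set.Ico (0 : ℝ) 1) x → HasSum (term y) (f x))) ∧
    (∀ dig : ℝ → ℕ → Bool,
      (∀ x ∈ Set.Ico (0 : ℝ) 1, ∀ n,
        x ∈ Set.Ico (a (pre (dig x) n)) (a (pre (dig x) n) + ℓ (pre (dig x) n))) →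
      (∀ᵐ x ∂(volume.restrict (Set.Ico (0 : ℝ) 1)),
        LowerSemicontinuousWithinAt f (Set.Ico (0 : ℝ) 1) x) →
      ∫⁻ x in Set.Ico (0 : ℝ) 1, ∑' n, ENNReal.ofReal (term (dig x) n) = 1) := by
  
  -- abbreviation for the infima
  set s : (ℕ → Bool) → ℕ → ℝ := fun y n =>
    sInf (f '' Set.Ico (a (pre y n)) (a (pre y n) + ℓ (pre y n))) with hs
  -- prefix recursion
  have hpre : ∀ (y : ℕ → Bool) (n : ℕ), pre y (n + 1) = pre y n ++ [y n] := by
    intro y n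
    rw [pre, List.ofFn_succ', List.concat_eq_append]
    rfl
  -- one-step nesting
  have hstep : ∀ (t : List Bool) (b : Bool),
      Set.Ico (a (t ++ [b])) (a (t ++ [b]) + ℓ (t ++ [b])) ⊆
        Set.Ico (a t) (a t + ℓ t) := by
    intro t b
    cases b with
    | false =>
        rw [haf]
        refine Set.Ico_subset_Ico le_rfl ?_
        have h1 := hll t
        have h2 := hpos (t ++ [true])
        linarith
    | true =>
        rw [hat]
        refine Set.Ico_subset_Ico ?_ ?_
        · have := hpos (t ++ [false]); linarith
        · have := hll t; linarith
  have hsub : ∀ (y : ℕ → Bool) (n : ℕ),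
      Set.Ico (a (pre y (n + 1))) (a (pre y (n + 1)) + ℓ (pre y (n + 1))) ⊆
        Set.Ico (a (pre y n)) (a (pre y n) + ℓ (pre y n)) := by
    intro y n
    rw [hpre y n]
    exact hstep (pre y n) (y n)
  have hsub01 : ∀ (y : ℕ → Bool) (n : ℕ),
      Set.Ico (a (pre y n)) (a (pre y n) + ℓ (pre y n)) ⊆ Set.Ico (0 : ℝ) 1 := by
    intro y n
    induction n with
    | zero => simp [pre, ha0, hl0]
    | succ n ih => exact (hsub y n).trans ih
  have hne : ∀ (y : ℕ → Bool) (n : ℕ),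
      (f '' Set.Ico (a (pre y n)) (a (pre y n) + ℓ (pre y n))).Nonempty := by
    intro y n
    refine Set.Nonempty.image f ?_
    rw [Set.nonempty_Ico]
    have := hpos (pre y n); linarith
  have hbdd : ∀ (y : ℕ → Bool) (n : ℕ),
      BddBelow (f '' Set.Ico (a (pre y n)) (a (pre y n) + ℓ (pre y n))) := by
    intro y n
    exact ⟨0, by rintro z ⟨w, -, rfl⟩; exact hf0 w⟩
  have hmono : ∀ y : ℕ → Bool, Monotone (s y) := by
    intro y
    refine monotone_nat_of_le_succ fun n => ?_
    exact csInf_le_csInf (hbdd y n) (hne y (n + 1)) (Set.image_mono (hsub y n))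
  have hnn : ∀ (y : ℕ → Bool) (n : ℕ), 0 ≤ term y n := by
    intro y n
    rw [hterm]
    cases n with
    | zero =>
        rw [if_pos rfl, sub_zero]
        refine Real.sInf_nonneg fun z hz => ?_
        obtain ⟨w, -, rfl⟩ := hz
        exact hf0 w
    | succ n =>
        simp only [Nat.succ_ne_zero, if_false, Nat.add_sub_cancel, sub_nonneg]
        exact hmono y (Nat.le_succ n)
  have hpartial : ∀ (y : ℕ → Bool) (n : ℕ),
      ∑ k ∈ Finset.range (n + 1), term y k = s y n := by
    intro y n
    induction n with
    | zero => simp [hterm y 0]; rfl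
    | succ n ih =>
        rw [Finset.sum_range_succ, ih, hterm y (n + 1)]
        simp only [Nat.succ_ne_zero, if_false, Nat.add_sub_cancel]
        ring
  -- key claim: the first conjunct
  have key : ∀ x ∈ Set.Ico (0 : ℝ) 1, ∀ y : ℕ → Bool,
      (∀ n, x ∈ Set.Ico (a (pre y n)) (a (pre y n) + ℓ (pre y n))) →
      HasSum (term y) (⨆ n, s y n) ∧
      (LowerSemicontinuousWithinAt f (Set.Ico (0 : ℝ) 1) x → HasSum (term y) (f x)) := by
    intro x hx y hmem
    have hle : ∀ n, s y n ≤ f x := fun n =>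
      csInf_le (hbdd y n) ⟨x, hmem n, rfl⟩
    have hbddA : BddAbove (Set.range (s y)) := ⟨f x, by rintro z ⟨n, rfl⟩; exact hle n⟩
    have htend : Tendsto (s y) atTop (nhds (⨆ n, s y n)) :=
      tendsto_atTop_ciSup (hmono y) hbddA
    have hsummable : Summable (term y) := by
      refine summable_of_sum_range_le (c := f x) (hnn y) fun n => ?_
      cases n with
      | zero => simpa using hf0 x
      | succ n => rw [hpartial y n]; exact hle n
    have htend2 : Tendsto (fun n => ∑ k ∈ Finset.range n, term y k) atTop
        (nhds (∑' n, term y n)) := hsummable.hasSum.tendsto_sum_nat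
    have htend3 : Tendsto (s y) atTop (nhds (∑' n, term y n)) := by
      exact (htend2.comp (tendsto_add_atTop_nat 1)).congr (hpartial y)
    have heq : (∑' n, term y n) = ⨆ n, s y n := tendsto_nhds_unique htend3 htend
    have h1 : HasSum (term y) (⨆ n, s y n) := heq ▸ hsummable.hasSum
    refine ⟨h1, fun hlsc => ?_⟩
    have hgoal : (⨆ n, s y n) = f x := by
      refine le_antisymm (ciSup_le hle) ?_
      by_contra hlt
      push_neg at hlt
      obtain ⟨c, hc1, hc2⟩ := exists_between hlt
      have hev := hlsc c hc2
      rw [Filter.eventually_iff, Metric.mem_nhdsWithin_iff] at hev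
      obtain ⟨ε, hε, hball⟩ := hev
      obtain ⟨n, hn⟩ := ((hlen y).eventually (gt_mem_nhds hε)).exists
      have hcle : c ≤ s y n := by
        refine le_csInf (hne y n) ?_
        rintro z ⟨w, hw, rfl⟩
        refine le_of_lt (hball ⟨?_, hsub01 y n hw⟩)
        have hx' := hmem n
        simp only [Set.mem_Ico] at hw hx'
        rw [Metric.mem_ball, Real.dist_eq, abs_sub_lt_iff]
        constructor <;> linarith
      have : s y n ≤ ⨆ n, s y n := le_ciSup hbddA n
      linarith
    exact hgoal ▸ h1
  refine ⟨key, ?_⟩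
  intro dig hmem hae
  have hint : IntegrableOn f (Set.Ico (0 : ℝ) 1) := by
    by_contra h
    rw [MeasureTheory.integral_undef h] at hf1
    norm_num at hf1
  have hcongr : ∀ᵐ x ∂(volume.restrict (Set.Ico (0 : ℝ) 1)),
      (∑' n, ENNReal.ofReal (term (dig x) n)) = ENNReal.ofReal (f x) := by
    filter_upwards [hae, ae_restrict_mem measurableSet_Ico] with x hlsc hx
    have hsum : HasSum (term (dig x)) (f x) :=
      (key x hx (dig x) (hmem x hx)).2 hlsc
    rw [← ENNReal.ofReal_tsum_of_nonneg (hnn (dig x)) hsum.summable, hsum.tsum_eq]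
  rw [lintegral_congr_ae hcongr,
    ← MeasureTheory.ofReal_integral_eq_lintegral_ofReal hint
      (Filter.Eventually.of_forall fun x => hf0 x), hf1, ENNReal.ofReal_one]
end

section
/- If Z > 0 is a random variable such that the fractional part of log_q(Z) is uniformly distributed on [0,1), then the joint distribution of the first n significant base-q digits of Z follows the extended Newcomb–Benford law: for every n ≥ 1 and every x_{1:n} ∈ {0,...,q-1}^n with x_1 ≠ 0, P(first n significant digits = x_{1:n}) = log_q(1 + (Σ_{i=1}^n x_i q^{n-i})^{-1}). -/
open MeasureTheory Set

lemma geom_aux (q : ℕ) (hq : 2 ≤ q) :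
    ∀ m : ℕ, ∑ i ∈ Finset.range m, ((q : ℝ) - 1) * (q : ℝ) ^ (-(i : ℤ) - 1)
      = 1 - (q : ℝ) ^ (-(m : ℤ)) := by
  have hq0 : (0 : ℝ) < q := by positivity
  intro m
  induction m with
  | zero => simp
  | succ m ih =>
      rw [Finset.sum_range_succ, ih]
      have h1 : (q : ℝ) ^ (-(m : ℤ)) = (q : ℝ) ^ (-(m : ℤ) - 1) * q := by
        rw [← zpow_add_one₀ (ne_of_gt hq0)]; ring_nf
      have h2 : (-(↑(m + 1) : ℤ)) = -(m : ℤ) - 1 := by push_cast; ring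
      rw [h2, h1]; ring

/-- If `Z > 0` is a random variable such that the fractional part of
`log_q Z` is uniformly distributed on `[0,1)`, then the first `n` significant base-`q`
digits of `Z` follow the extended Newcomb–Benford law: for every `n ≥ 1` and every digit
string `x_{1:n} ∈ {0,…,q-1}^n` with `x_1 ≠ 0`,
`P(first n significant digits = x_{1:n}) = log_q (1 + (Σ_{i=1}^n x_i q^{n-i})⁻¹)`.
Here the mantissa-over-`q` is `X = q^{fract(log_q Z) − 1} ∈ [1/q, 1)` and the event
`{first n significant digits = x_{1:n}}` is `{X ∈ [Σ x_i q^{-i}, Σ x_i q^{-i} + q^{-n})}`. -/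
theorem stmt_6 {Ω : Type*} [MeasurableSpace Ω] (μ : Measure Ω) [IsProbabilityMeasure μ]
    (q : ℕ) (hq : 2 ≤ q) (Z : Ω → ℝ) (hZmeas : Measurable Z) (hZpos : ∀ ω, 0 < Z ω)
    (hunif : μ.map (fun ω => Int.fract (Real.logb q (Z ω)))
      = volume.restrict (Set.Ico (0 : ℝ) 1))
    (n : ℕ) (hn : 1 ≤ n) (x : Fin n → Fin q) (hx : (x ⟨0, hn⟩ : ℕ) ≠ 0) :
    μ {ω | (q : ℝ) ^ (Int.fract (Real.logb q (Z ω)) - 1) ∈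
        Set.Ico (∑ i : Fin n, (x i : ℝ) * (q : ℝ) ^ (-(i : ℤ) - 1))
          ((∑ i : Fin n, (x i : ℝ) * (q : ℝ) ^ (-(i : ℤ) - 1)) + (q : ℝ) ^ (-(n : ℤ)))}
      = ENNReal.ofReal
          (Real.logb q (1 + ((∑ i : Fin n, (x i : ℝ) * (q : ℝ) ^ ((n : ℤ) - (i : ℤ) - 1)))⁻¹)) := by
  have hq1 : (1 : ℝ) < q := by exact_mod_cast lt_of_lt_of_le one_lt_two hq
  have hq0 : (0 : ℝ) < q := lt_trans one_pos hq1
  have hqne1 : (q : ℝ) ≠ 1 := ne_of_gt hq1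
  set S : ℝ := ∑ i : Fin n, (x i : ℝ) * (q : ℝ) ^ (-(i : ℤ) - 1) with hS
  set ε : ℝ := (q : ℝ) ^ (-(n : ℤ)) with hε
  have hεpos : (0 : ℝ) < ε := zpow_pos hq0 _
  -- lower bound
  have hSlb : (q : ℝ)⁻¹ ≤ S := by
    have h0 : ∀ i ∈ Finset.univ, (0 : ℝ) ≤ (x i : ℝ) * (q : ℝ) ^ (-(i : ℤ) - 1) := by
      intro i _; positivity
    have h1 := Finset.single_le_sum h0 (Finset.mem_univ (⟨0, hn⟩ : Fin n))
    have hx1 : (1 : ℝ) ≤ (x ⟨0, hn⟩ : ℝ) := by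
      have : 1 ≤ (x ⟨0, hn⟩ : ℕ) := Nat.one_le_iff_ne_zero.mpr hx
      exact_mod_cast this
    have h2 : ((⟨0, hn⟩ : Fin n) : ℤ) = 0 := rfl
    rw [h2] at h1
    have h3 : (q : ℝ) ^ ((0 : ℤ) - 1 * 1 * 1) = (q : ℝ)⁻¹ := by
      norm_num
    calc (q : ℝ)⁻¹ = 1 * (q : ℝ) ^ (-(0 : ℤ) - 1) := by norm_num
    _ ≤ (x ⟨0, hn⟩ : ℝ) * (q : ℝ) ^ (-(0 : ℤ) - 1) := by
        apply mul_le_mul_of_nonneg_right hx1; positivity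
    _ ≤ S := h1
  have hSpos : 0 < S := lt_of_lt_of_le (inv_pos.mpr hq0) hSlb
  -- upper bound
  have hub : S + ε ≤ 1 := by
    have h1 : S ≤ ∑ i : Fin n, ((q : ℝ) - 1) * (q : ℝ) ^ (-(i : ℤ) - 1) := by
      apply Finset.sum_le_sum
      intro i _
      apply mul_le_mul_of_nonneg_right _ (by positivity)
      have h := (x i).isLt
      have : ((x i : ℕ) : ℝ) + 1 ≤ (q : ℝ) := by exact_mod_cast h
      linarith
    rw [Fin.sum_univ_eq_sum_range (fun i => ((q : ℝ) - 1) * (q : ℝ) ^ (-(i : ℤ) - 1)) n] at h1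
    have h2 := geom_aux q hq n
    rw [h2] at h1
    rw [hε]; linarith
  set a : ℝ := 1 + Real.logb q S with ha
  set b : ℝ := 1 + Real.logb q (S + ε) with hb
  -- interval characterization
  have hchar : ∀ t : ℝ, ((q : ℝ) ^ (t - 1) ∈ Set.Ico S (S + ε)) ↔ t ∈ Set.Ico a b := by
    intro t
    constructor
    · rintro ⟨h1, h2⟩
      constructor
      · have h' : (q : ℝ) ^ Real.logb q S ≤ (q : ℝ) ^ (t - 1) := by
          rw [Real.rpow_logb hq0 hqne1 hSpos]; exact h1
        have := (Real.rpow_le_rpow_left_iff hq1).mp h'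
        rw [ha]; linarith
      · have h' : (q : ℝ) ^ (t - 1) < (q : ℝ) ^ Real.logb q (S + ε) := by
          rw [Real.rpow_logb hq0 hqne1 (by linarith : (0:ℝ) < S + ε)]; exact h2
        have := (Real.rpow_lt_rpow_left_iff hq1).mp h'
        rw [hb]; linarith
    · rintro ⟨h1, h2⟩
      constructor
      · rw [← Real.rpow_logb hq0 hqne1 hSpos]
        exact (Real.rpow_le_rpow_left_iff hq1).mpr (by rw [ha] at h1; linarith)
      · rw [← Real.rpow_logb hq0 hqne1 (by linarith : (0:ℝ) < S + ε)]
        exact (Real.rpow_lt_rpow_left_iff hq1).mpr (by rw [hb] at h2; linarith)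
  have hev : {ω | (q : ℝ) ^ (Int.fract (Real.logb q (Z ω)) - 1) ∈ Set.Ico S (S + ε)}
      = (fun ω => Int.fract (Real.logb q (Z ω))) ⁻¹' Set.Ico a b := by
    ext ω; exact hchar _
  have hmeas : Measurable (fun ω => Int.fract (Real.logb q (Z ω))) := by
    apply measurable_fract.comp
    simp only [Real.logb]
    exact (Real.measurable_log.comp hZmeas).div_const _
  have h0a : 0 ≤ a := by
    rw [ha]
    have : Real.logb q (q : ℝ)⁻¹ ≤ Real.logb q S :=
      Real.logb_le_logb_of_le hq1 (by positivity) hSlb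
    rw [Real.logb_inv, Real.logb_self_eq_one hq1] at this
    linarith
  have hb1 : b ≤ 1 := by
    rw [hb]
    have : Real.logb q (S + ε) ≤ Real.logb q 1 :=
      Real.logb_le_logb_of_le hq1 (by positivity) hub
    rw [Real.logb_one] at this
    linarith
  have hinter : Set.Ico a b ∩ Set.Ico (0 : ℝ) 1 = Set.Ico a b := by
    apply Set.inter_eq_left.mpr
    exact Set.Ico_subset_Ico h0a hb1
  rw [hev, ← Measure.map_apply hmeas measurableSet_Ico, hunif,
    Measure.restrict_apply measurableSet_Ico, hinter, Real.volume_Ico]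
  congr 1
  -- arithmetic of logs
  have hT : (∑ i : Fin n, (x i : ℝ) * (q : ℝ) ^ ((n : ℤ) - (i : ℤ) - 1)) = (q : ℝ) ^ (n : ℤ) * S := by
    rw [hS, Finset.mul_sum]
    apply Finset.sum_congr rfl
    intro i _
    rw [show ((n : ℤ) - (i : ℤ) - 1) = (n : ℤ) + (-(i : ℤ) - 1) by ring,
      zpow_add₀ (ne_of_gt hq0)]
    ring
  have hqn : (0 : ℝ) < (q : ℝ) ^ (n : ℤ) := zpow_pos hq0 _
  have harg : 1 + ((q : ℝ) ^ (n : ℤ) * S)⁻¹ = (S + ε) / S := by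
    rw [hε]
    rw [zpow_neg]
    field_simp
  rw [hT, harg, Real.logb_div (by linarith) (ne_of_gt hSpos), ha, hb]
  ring
end

section
/- Let P be the random probability measure induced by a generalized finite Pólya tree of type 1: conditionally on N = n, the density on [0,1) is f(x | Y^{(n)}) = (∏_{j=1}^n Y_{x_{1:j-1},0}^{1-x_j} Y_{x_{1:j-1},1}^{x_j}) / ℓ_{x_{1:n}} where x has digits x_1 x_2 .... Then for every d ≥ 1 and every binary string x_{1:d}, E[P(I_{x_{1:d}})] = Σ_{n=0}^{d-1} p_n · (ℓ_{x_{1:d}}/ℓ_{x_{1:n}}) · ∏_{j=1}^n α_{x_{1:j}}/(α_{x_{1:j-1},0} + α_{x_{1:j-1},1}) + P(N ≥ d) · ∏_{j=1}^d α_{x_{1:j}}/(α_{x_{1:j-1},0} + α_{x_{1:j-1},1}). -/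
open MeasureTheory ProbabilityTheory Finset

lemma aux_integral_prod {Ω : Type*} [MeasurableSpace Ω] (μ : Measure Ω) [IsProbabilityMeasure μ]
    {ι : Type*} (f : ι → Ω → ℝ) (hmeas : ∀ i, Measurable (f i))
    (hind : iIndepFun f μ)
    (s : Finset ι) :
    ∫ ω, ∏ i ∈ s, f i ω ∂μ = ∏ i ∈ s, ∫ ω, f i ω ∂μ := by
  classical
  induction s using Finset.induction with
  | empty => simp
  | insert i s hi ih =>
    have hIF : IndepFun (∏ j ∈ s, f j) (f i) μ :=
      hind.indepFun_finsetProd_of_notMem hmeas hi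
    have hP : Measurable (∏ j ∈ s, f j) := by
      have := Finset.measurable_prod s (fun j (_ : j ∈ s) => hmeas j)
      convert this using 1; funext ω; simp [Finset.prod_apply]
    have h := hIF.integral_mul_eq_mul_integral hP.aestronglyMeasurable (hmeas i).aestronglyMeasurable
    simp only [Finset.prod_insert hi, ← ih]
    calc ∫ ω, f i ω * ∏ j ∈ s, f j ω ∂μ
        = ∫ ω, ((∏ j ∈ s, f j) * f i) ω ∂μ := by
          congr 1; funext ω; simp [mul_comm, Finset.prod_apply]
      _ = (∫ ω, (∏ j ∈ s, f j) ω ∂μ) * ∫ ω, f i ω ∂μ := h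
      _ = (∫ ω, ∏ j ∈ s, f j ω ∂μ) * ∫ ω, f i ω ∂μ := by
          congr 1; apply integral_congr_ae; filter_upwards with ω; simp [Finset.prod_apply]
      _ = (∫ ω, f i ω ∂μ) * ∫ ω, ∏ j ∈ s, f j ω ∂μ := mul_comm _ _

/-- Mean of the random probability measure `P` induced by a generalized finite
Pólya tree of type 1.  Conditionally on `(Y, N)`, the mass assigned to the level-`d`
interval `I_{x_{1:d}}` is
`P(I_{x_{1:d}}) = (∏_{j=1}^{min(N,d)} Y_{x_{1:j}}) · ℓ_{x_{1:d}} / ℓ_{x_{1:min(N,d)}}`,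
obtained by integrating the GFPT1 density `f(·|Y^{(N)})` over `I_{x_{1:d}}`.  Then
`E[P(I_{x_{1:d}})] = Σ_{n=0}^{d-1} p_n (ℓ_{x_{1:d}}/ℓ_{x_{1:n}}) ∏_{j=1}^n α_{x_{1:j}}/(α_{x_{1:j-1},0}+α_{x_{1:j-1},1})
  + P(N ≥ d) ∏_{j=1}^d α_{x_{1:j}}/(α_{x_{1:j-1},0}+α_{x_{1:j-1},1})`. -/
theorem stmt_7 {Ω : Type*} [MeasurableSpace Ω] (μ : Measure Ω) [IsProbabilityMeasure μ]
    (ℓ : List Bool → ℝ) (hl0 : ℓ [] = 1) (hlpos : ∀ s, 0 < ℓ s)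
    (hll : ∀ s, ℓ s = ℓ (s ++ [false]) + ℓ (s ++ [true]))
    (α : List Bool → ℝ) (hα : ∀ s, 0 ≤ α s)
    (hαsum : ∀ s, 0 < α (s ++ [false]) + α (s ++ [true]))
    (Y : List Bool → Ω → ℝ) (hYmeas : ∀ s, Measurable (Y s))
    (hYrange : ∀ s ω, Y s ω ∈ Set.Icc (0 : ℝ) 1)
    (hYsum : ∀ s ω, Y (s ++ [true]) ω = 1 - Y (s ++ [false]) ω)
    -- each `Y_{s,0} ~ Beta(α_{s,0}, α_{s,1})`, so it has the Beta mean: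
    (hYmean : ∀ s b, ∫ ω, Y (s ++ [b]) ω ∂μ
      = α (s ++ [b]) / (α (s ++ [false]) + α (s ++ [true])))
    (hYindep : iIndepFun
      (fun s => Y (s ++ [false])) μ)
    (N : Ω → ℕ) (hN : Measurable N)
    (hNY : IndepFun N (fun ω s => Y s ω) μ)
    (p : ℕ → ℝ) (hp : ∀ n, p n = (μ {ω | N ω = n}).toReal)
    (x : List Bool) (d : ℕ) (hd : 1 ≤ d) (hx : x.length = d) :
    ∫ ω, ((∏ j ∈ Finset.range (min (N ω) d), Y (x.take (j + 1)) ω) *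
        (ℓ x / ℓ (x.take (min (N ω) d)))) ∂μ
      = (∑ n ∈ Finset.range d, p n * (ℓ x / ℓ (x.take n)) *
            ∏ j ∈ Finset.range n,
              α (x.take (j + 1)) / (α (x.take j ++ [false]) + α (x.take j ++ [true])))
        + (μ {ω | d ≤ N ω}).toReal *
            ∏ j ∈ Finset.range d,
              α (x.take (j + 1)) / (α (x.take j ++ [false]) + α (x.take j ++ [true])) := by
  classical
  set c : ℕ → ℝ := fun n => ℓ x / ℓ (x.take n) with hc
  set A : ℕ → ℝ := fun n => ∏ j ∈ Finset.range n,
      α (x.take (j + 1)) / (α (x.take j ++ [false]) + α (x.take j ++ [true])) with hA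
  -- the independent family
  set f : List Bool → Ω → ℝ := fun s ω =>
    if x.getD s.length false then 1 - Y (s ++ [false]) ω else Y (s ++ [false]) ω with hf
  have hfmeas : ∀ s, Measurable (f s) := by
    intro s
    by_cases hb : x.getD s.length false <;>
      simp only [hf, hb, if_true, if_false]
    · exact measurable_const.sub (hYmeas _)
    · exact hYmeas _
  have hfind : iIndepFun f μ := by
    have := hYindep.comp
      (fun s (t : ℝ) => if x.getD s.length false then 1 - t else t)
      (fun s => by
        by_cases hb : x.getD s.length false <;> simp only [hb, if_true, if_false]
        · exact measurable_const.sub measurable_id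
        · exact measurable_id)
    exact this
  have htake : ∀ j, j < d → x.take (j + 1) = x.take j ++ [x.getD j false] := by
    intro j hj
    have hj' : j < x.length := by omega
    rw [List.take_succ, List.getElem?_eq_getElem hj', List.getD_eq_getElem x false hj']
    rfl
  have hkey : ∀ j, j < d → ∀ ω, Y (x.take (j + 1)) ω = f (x.take j) ω := by
    intro j hj ω
    have hlen : (x.take j).length = j := by
      rw [List.length_take]; omega
    rw [htake j hj, hf]
    simp only [hlen]
    cases hbe : x.getD j false with
    | false => simp [hbe]
    | true => simp [hbe, hYsum]
  -- mean of f at x.take j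
  have hfmean : ∀ j, j < d → ∫ ω, f (x.take j) ω ∂μ
      = α (x.take (j + 1)) / (α (x.take j ++ [false]) + α (x.take j ++ [true])) := by
    intro j hj
    have h1 : ∫ ω, f (x.take j) ω ∂μ = ∫ ω, Y (x.take (j + 1)) ω ∂μ := by
      apply integral_congr_ae; filter_upwards with ω; rw [hkey j hj ω]
    rw [h1, htake j hj, hYmean]
  -- expectation of the product
  have hEprod : ∀ n, n ≤ d →
      ∫ ω, ∏ j ∈ Finset.range n, Y (x.take (j + 1)) ω ∂μ = A n := by
    intro n hn
    have hinj : Set.InjOn (fun j => x.take j) (Finset.range n) := by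
      intro a ha b hb hab
      simp only [Finset.coe_range, Set.mem_Iio] at ha hb
      have la : (x.take a).length = a := by rw [List.length_take]; omega
      have lb : (x.take b).length = b := by rw [List.length_take]; omega
      have h2 : (x.take a).length = (x.take b).length := congrArg List.length hab
      omega
    have h1 : ∫ ω, ∏ j ∈ Finset.range n, Y (x.take (j + 1)) ω ∂μ
        = ∫ ω, ∏ s ∈ (Finset.range n).image (fun j => x.take j), f s ω ∂μ := by
      apply integral_congr_ae; filter_upwards with ω
      rw [Finset.prod_image (fun a ha b hb => hinj ha hb)]
      exact Finset.prod_congr rfl (fun j hj => hkey j (lt_of_lt_of_le (Finset.mem_range.mp hj) hn) ω)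
    rw [h1, aux_integral_prod μ f hfmeas hfind,
      Finset.prod_image (fun a ha b hb => hinj ha hb), hA]
    exact Finset.prod_congr rfl
      (fun j hj => hfmean j (lt_of_lt_of_le (Finset.mem_range.mp hj) hn))
  -- decomposition over values of min (N ω) d
  set T : ℕ → Ω → ℝ := fun n ω =>
    (if min (N ω) d = n then (1 : ℝ) else 0) *
      ((∏ j ∈ Finset.range n, Y (x.take (j + 1)) ω) * c n) with hT
  have hdecomp : ∀ ω, (∏ j ∈ Finset.range (min (N ω) d), Y (x.take (j + 1)) ω) * c (min (N ω) d)
      = ∑ n ∈ Finset.range (d + 1), T n ω := by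
    intro ω
    rw [Finset.sum_eq_single_of_mem (min (N ω) d)
      (Finset.mem_range.mpr (by omega))]
    · simp [hT]
    · intro b _ hb
      have hbb : ¬ (min (N ω) d = b) := fun h => hb h.symm
      simp [hT, hbb]
  have hprodmem : ∀ n (ω : Ω), (∏ j ∈ Finset.range n, Y (x.take (j + 1)) ω) ∈ Set.Icc (0:ℝ) 1 := by
    intro n ω
    constructor
    · exact Finset.prod_nonneg (fun j _ => (hYrange _ ω).1)
    · exact Finset.prod_le_one (fun j _ => (hYrange _ ω).1) (fun j _ => (hYrange _ ω).2)
  have hTmeas : ∀ n, Measurable (T n) := by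
    intro n
    apply Measurable.mul
    · have : Measurable fun m : ℕ => (if min m d = n then (1:ℝ) else 0) := measurable_from_top
      exact this.comp hN
    · apply Measurable.mul _ measurable_const
      exact Finset.measurable_prod (Finset.range n)
        (fun j (_ : j ∈ Finset.range n) => hYmeas (x.take (j+1)))
  have hTint : ∀ n, Integrable (T n) μ := by
    intro n
    apply Integrable.mono' (integrable_const |c n|) (hTmeas n).aestronglyMeasurable
    filter_upwards with ω
    rw [Real.norm_eq_abs, abs_mul, abs_mul]
    by_cases h : min (N ω) d = n
    · simp only [h, if_true, abs_one, one_mul]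
      calc |∏ j ∈ Finset.range n, Y (x.take (j + 1)) ω| * |c n| ≤ 1 * |c n| := by
            apply mul_le_mul_of_nonneg_right _ (abs_nonneg _)
            rw [abs_of_nonneg (hprodmem n ω).1]; exact (hprodmem n ω).2
        _ = |c n| := one_mul _
    · simp [h]
  -- the measurable vector of Y's
  have hYvec : Measurable (fun ω s => Y s ω) :=
    measurable_pi_lambda _ (fun s => hYmeas s)
  have hterm : ∀ n, n ≤ d → ∫ ω, T n ω ∂μ
      = (μ {ω | min (N ω) d = n}).toReal * (A n * c n) := by
    intro n hn
    set φ : ℕ → ℝ := fun m => if min m d = n then (1:ℝ) else 0 with hφ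
    set g : (List Bool → ℝ) → ℝ := fun y =>
      (∏ j ∈ Finset.range n, y (x.take (j + 1))) * c n with hg
    have hgmeas : Measurable g := by
      apply Measurable.mul _ measurable_const
      exact Finset.measurable_prod (Finset.range n)
        (fun j _ => measurable_pi_apply (x.take (j+1)))
    have hind : IndepFun (φ ∘ N) (g ∘ fun ω s => Y s ω) μ :=
      hNY.comp measurable_from_top hgmeas
    have heq : T n = (φ ∘ N) * (g ∘ fun ω s => Y s ω) := by
      funext ω; simp [hT, hφ, hg]
    rw [heq]
    rw [hind.integral_mul_eq_mul_integral ((measurable_from_top.comp hN).aestronglyMeasurable)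
      ((hgmeas.comp hYvec).aestronglyMeasurable)]
    congr 1
    · -- ∫ φ ∘ N = μ {min N d = n}
      have hS : MeasurableSet {ω | min (N ω) d = n} := by
        have hm : Measurable fun ω => min (N ω) d :=
          (measurable_from_top (f := fun m : ℕ => min m d)).comp hN
        exact hm (measurableSet_singleton n)
      have : (φ ∘ N) = Set.indicator {ω | min (N ω) d = n} (fun _ => (1:ℝ)) := by
        funext ω; simp [hφ, Set.indicator_apply, Set.mem_setOf_eq]
      rw [this, integral_indicator_const _ hS]
      simp [measureReal_def]
    · -- ∫ g ∘ Yvec = A n * c n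
      have : ∫ ω, (g ∘ fun ω s => Y s ω) ω ∂μ
          = ∫ ω, (∏ j ∈ Finset.range n, Y (x.take (j + 1)) ω) * c n ∂μ := by
        apply integral_congr_ae; filter_upwards with ω; simp [hg]
      rw [this, integral_mul_const, hEprod n hn]
  -- put it all together
  have hmain : ∫ ω, ((∏ j ∈ Finset.range (min (N ω) d), Y (x.take (j + 1)) ω) *
      c (min (N ω) d)) ∂μ = ∑ n ∈ Finset.range (d + 1),
        (μ {ω | min (N ω) d = n}).toReal * (A n * c n) := by
    rw [integral_congr_ae (Filter.Eventually.of_forall hdecomp),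
      integral_finset_sum _ (fun n _ => hTint n)]
    exact Finset.sum_congr rfl (fun n hn => hterm n (by
      have := Finset.mem_range.mp hn; omega))
  have hmain' : ∫ ω, ((∏ j ∈ Finset.range (min (N ω) d), Y (x.take (j + 1)) ω) *
        (ℓ x / ℓ (x.take (min (N ω) d)))) ∂μ
      = ∑ n ∈ Finset.range (d + 1),
          (μ {ω | min (N ω) d = n}).toReal * (A n * c n) := hmain
  rw [hmain', Finset.sum_range_succ]
  congr 1
  · apply Finset.sum_congr rfl
    intro n hn
    have hn' : n < d := Finset.mem_range.mp hn
    have hset : {ω | min (N ω) d = n} = {ω | N ω = n} := by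
      ext ω; simp only [Set.mem_setOf_eq]; omega
    rw [hset, ← hp n]
    simp only [hA, hc]
    ring
  · have h1 : {ω | min (N ω) d = d} = {ω | d ≤ N ω} := by
      ext ω; simp only [Set.mem_setOf_eq]; omega
    have h2 : c d = 1 := by
      show ℓ x / ℓ (x.take d) = 1
      rw [← hx, List.take_length, div_self (hlpos x).ne']
    rw [h1, h2, mul_one]
end

section
/- Under the GFPT1 model, the posterior mean of the random density at a point x = .x_1x_2... ∈ [0,1) equals E[f(x | Y^{(N)}) | Z_{1:m} = z_{1:m}] = Σ_{n=0}^∞ (p(n | z_{1:m})/ℓ_{x_{1:n}}) · ∏_{j=1}^n γ_{x_{1:j}}/(γ_{x_{1:j-1},0} + γ_{x_{1:j-1},1}), where γ_{x_{1:j}} = α_{x_{1:j}} + n_{x_{1:j}}(z_{1:m}) and p(n | z_{1:m}) is the posterior PMF of N. -/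
open MeasureTheory ProbabilityTheory Finset
open scoped NNReal ENNReal

/-- Beta function with the convention `B(0,x) = B(x,0) = 1`. -/
noncomputable def betaFn (a b : ℝ) : ℝ :=
  if a = 0 ∨ b = 0 then 1 else ∫ t in Set.Ioo (0 : ℝ) 1, t ^ (a - 1) * (1 - t) ^ (b - 1)

/-- The Beta(a,b) distribution, with the degenerate (Dirac) convention when a parameter
vanishes. -/
noncomputable def betaMeasure (a b : ℝ) : Measure ℝ :=
  if a = 0 then Measure.dirac 0
  else if b = 0 then Measure.dirac 1
  else (volume.restrict (Set.Ioo (0 : ℝ) 1)).withDensity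
    (fun t => ENNReal.ofReal (t ^ (a - 1) * (1 - t) ^ (b - 1) / betaFn a b))

/-- `cnt a ℓ z s` = number of observations `z i` falling in the interval `I_s`. -/
noncomputable def cnt (a ℓ : List Bool → ℝ) {m : ℕ} (z : Fin m → ℝ) (s : List Bool) : ℕ :=
  (Finset.univ.filter (fun i => z i ∈ Set.Ico (a s) (a s + ℓ s))).card

lemma betaFn_eq_gamma {a b : ℝ} (ha : 0 < a) (hb : 0 < b) :
    betaFn a b = Real.Gamma a * Real.Gamma b / Real.Gamma (a + b) := by
  have hint : Complex.betaIntegral (a : ℂ) (b : ℂ) = ((betaFn a b : ℝ) : ℂ) := by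
    rw [betaFn, if_neg (by push_neg; exact ⟨ha.ne', hb.ne'⟩)]
    rw [Complex.betaIntegral, intervalIntegral.integral_of_le zero_le_one,
      integral_Ioc_eq_integral_Ioo]
    rw [show ((∫ t in Set.Ioo (0:ℝ) 1, t ^ (a - 1) * (1 - t) ^ (b - 1) : ℝ) : ℂ)
        = ∫ t in Set.Ioo (0:ℝ) 1, ((t ^ (a - 1) * (1 - t) ^ (b - 1) : ℝ) : ℂ)
      from (integral_ofReal (𝕜 := ℂ)).symm]
    refine setIntegral_congr_fun measurableSet_Ioo (fun t ht => ?_)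
    rw [Complex.ofReal_mul, Complex.ofReal_cpow ht.1.le, Complex.ofReal_cpow (by linarith [ht.2] : (0:ℝ) ≤ 1 - t)]
    push_cast
    ring
  have h := Complex.Gamma_mul_Gamma_eq_betaIntegral (s := (a:ℂ)) (t := (b:ℂ))
    (by simpa using ha) (by simpa using hb)
  rw [hint] at h
  have hG : Real.Gamma (a + b) ≠ 0 := (Real.Gamma_pos_of_pos (by linarith)).ne'
  have : ((Real.Gamma a * Real.Gamma b : ℝ) : ℂ) = ((Real.Gamma (a+b) * betaFn a b : ℝ) : ℂ) := by
    push_cast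
    rw [← Complex.Gamma_ofReal, ← Complex.Gamma_ofReal, ← Complex.Gamma_ofReal] at *
    push_cast at h ⊢
    rw [h]
  have h2 := Complex.ofReal_inj.mp this
  field_simp
  linarith [h2]

lemma betaFn_pos {a b : ℝ} (ha : 0 < a) (hb : 0 < b) : 0 < betaFn a b := by
  rw [betaFn_eq_gamma ha hb]
  exact div_pos (mul_pos (Real.Gamma_pos_of_pos ha) (Real.Gamma_pos_of_pos hb))
    (Real.Gamma_pos_of_pos (by linarith))

lemma betaFn_succ {a b : ℝ} (ha : 0 < a) (hb : 0 < b) :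
    betaFn (a + 1) b = a / (a + b) * betaFn a b := by
  rw [betaFn_eq_gamma (by linarith) hb, betaFn_eq_gamma ha hb,
    Real.Gamma_add_one ha.ne', show a + 1 + b = (a + b) + 1 by ring,
    Real.Gamma_add_one (by linarith : a + b ≠ 0)]
  have h1 := (Real.Gamma_pos_of_pos ha).ne'
  have h2 := (Real.Gamma_pos_of_pos hb).ne'
  have h3 := (Real.Gamma_pos_of_pos (by linarith : (0:ℝ) < a + b)).ne'
  field_simp

lemma betaMeasure_mean {a b : ℝ} (ha : 0 ≤ a) (hb : 0 ≤ b) (hab : 0 < a + b) :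
    ∫ t, t ∂(_root_.betaMeasure a b) = a / (a + b) := by
  rcases eq_or_lt_of_le ha with ha0 | ha
  · rw [_root_.betaMeasure, if_pos ha0.symm, integral_dirac, ← ha0, zero_div]
  rcases eq_or_lt_of_le hb with hb0 | hb
  · rw [_root_.betaMeasure, if_neg ha.ne', if_pos hb0.symm, integral_dirac, ← hb0, add_zero,
      div_self ha.ne']
  rw [_root_.betaMeasure, if_neg ha.ne', if_neg hb.ne']
  have hB := betaFn_pos ha hb
  set pdf : ℝ → ℝ := fun t => t ^ (a - 1) * (1 - t) ^ (b - 1) / betaFn a b with hpdf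
  have hpm : Measurable pdf := by
    rw [hpdf]; fun_prop
  have hcoe : (fun t => ENNReal.ofReal (pdf t)) = fun t => ((Real.toNNReal (pdf t) : ℝ≥0) : ℝ≥0∞) := rfl
  have hm2 : Measurable fun t => Real.toNNReal (pdf t) := measurable_real_toNNReal.comp hpm
  rw [hcoe, integral_withDensity_eq_integral_smul hm2 _]
  have : ∫ t in Set.Ioo (0:ℝ) 1, (Real.toNNReal (pdf t)) • t
      = ∫ t in Set.Ioo (0:ℝ) 1, (t ^ ((a+1) - 1) * (1 - t) ^ (b - 1)) / betaFn a b := by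
    refine setIntegral_congr_fun measurableSet_Ioo (fun t ht => ?_)
    have ht0 : (0:ℝ) < t := ht.1
    have ht1 : (0:ℝ) < 1 - t := by linarith [ht.2]
    have hpnn : 0 ≤ pdf t := by
      apply div_nonneg _ hB.le
      exact mul_nonneg (Real.rpow_nonneg ht0.le _) (Real.rpow_nonneg ht1.le _)
    rw [NNReal.smul_def, smul_eq_mul, Real.coe_toNNReal _ hpnn, hpdf]
    have : t ^ ((a+1) - 1) = t ^ (a - 1) * t := by
      rw [show (a+1) - 1 = (a - 1) + 1 by ring, Real.rpow_add ht0, Real.rpow_one]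
    rw [this]
    ring
  rw [this, integral_div]
  have hbeta : ∫ t in Set.Ioo (0:ℝ) 1, t ^ ((a+1) - 1) * (1 - t) ^ (b - 1) = betaFn (a+1) b := by
    rw [betaFn, if_neg (by push_neg; exact ⟨by linarith, hb.ne'⟩)]
  rw [hbeta, betaFn_succ ha hb, mul_div_assoc, div_self hB.ne', mul_one]

lemma iIndepFun_reindex {Ω ι κ β : Type*} [MeasurableSpace Ω] {μ : Measure Ω}
    {mβ : MeasurableSpace β} {f : ι → Ω → β} (g : κ → ι) (hg : Function.Injective g)
    (h : iIndepFun (m := fun _ : ι => mβ) f μ) :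
    iIndepFun (m := fun _ : κ => mβ) (fun k => f (g k)) μ := by
  classical
  rw [iIndepFun_iff_measure_inter_preimage_eq_mul] at h ⊢
  intro S sets hsets
  rcases S.eq_empty_or_nonempty with rfl | ⟨k0, hk0⟩
  · simpa using h ∅ (sets := fun _ => Set.univ) (by simp)
  haveI : Nonempty κ := ⟨k0⟩
  have hgg' : ∀ k, Function.invFun g (g k) = k := fun k => Function.leftInverse_invFun hg k
  have key := h (S.image g) (sets := fun i => sets (Function.invFun g i)) (fun i hi => by
    rcases Finset.mem_image.mp hi with ⟨k, hk, rfl⟩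
    simpa [hgg' k] using hsets k hk)
  have h1 : (⋂ i ∈ S.image g, f i ⁻¹' sets (Function.invFun g i))
      = ⋂ k ∈ S, f (g k) ⁻¹' sets k := by
    ext ω
    simp only [Set.mem_iInter, Finset.mem_image]
    constructor
    · intro H k hk
      simpa [hgg' k] using H (g k) ⟨k, hk, rfl⟩
    · rintro H i ⟨k, hk, rfl⟩
      simpa [hgg' k] using H k hk
  have h2 : ∏ i ∈ S.image g, μ (f i ⁻¹' sets (Function.invFun g i))
      = ∏ k ∈ S, μ (f (g k) ⁻¹' sets k) := by
    rw [Finset.prod_image (fun x _ y _ hxy => hg hxy)]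
    exact Finset.prod_congr rfl (fun k _ => by rw [hgg' k])
  rw [h1, h2] at key
  exact key

lemma integral_prod_of_iIndepFun {Ω : Type*} [MeasurableSpace Ω] {μ : Measure Ω}
    [IsProbabilityMeasure μ] {G : ℕ → Ω → ℝ} (hmeas : ∀ j, Measurable (G j))
    (hindep : iIndepFun (m := fun _ : ℕ => (inferInstance : MeasurableSpace ℝ)) G μ) (n : ℕ) :
    ∫ ω, ∏ j ∈ Finset.range n, G j ω ∂μ = ∏ j ∈ Finset.range n, ∫ ω, G j ω ∂μ := by
  induction n with
  | zero => simp
  | succ n ih =>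
    have e1 : (∏ j ∈ Finset.range n, G j) = fun ω => ∏ j ∈ Finset.range n, G j ω := by
      funext ω; simp
    have hfun : (fun ω => ∏ j ∈ Finset.range (n+1), G j ω)
        = (∏ j ∈ Finset.range n, G j) * G n := by
      funext ω
      simp [Finset.prod_range_succ]
    have hPm : AEStronglyMeasurable (∏ j ∈ Finset.range n, G j) μ := by
      rw [e1]; exact (Finset.measurable_prod _ (fun j _ => hmeas j)).aestronglyMeasurable
    have hI : IndepFun (∏ j ∈ Finset.range n, G j) (G n) μ :=
      hindep.indepFun_prod_range_succ hmeas n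
    have hmul := hI.integral_mul_eq_mul_integral hPm (hmeas n).aestronglyMeasurable
    rw [hfun, hmul, Finset.prod_range_succ, ← ih, e1]

lemma pre_succ (y : ℕ → Bool) (n : ℕ) : pre y (n+1) = pre y n ++ [y n] := by
  rw [pre, pre, List.ofFn_succ']
  simp [Fin.last]

lemma pre_length (y : ℕ → Bool) (n : ℕ) : (pre y n).length = n := by
  simp [pre]

/-- Under the GFPT1 model, the posterior mean of the random density at a
point `x = .x_1x_2… ∈ [0,1)` is
`E[f(x|Y^{(N)}) | Z_{1:m} = z_{1:m}]
  = Σ_{n=0}^∞ (p(n|z)/ℓ_{x_{1:n}}) ∏_{j=1}^n γ_{x_{1:j}}/(γ_{x_{1:j-1},0}+γ_{x_{1:j-1},1})`,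
where `γ_s = α_s + n_s(z_{1:m})`.  Here the posterior distribution of `(N, Y)` is
represented on a probability space `(Ω, μ)`: `N'` has PMF the posterior `p(·|z)`, and
conditionally on `N' = n` the coordinates `Y'_{s,0}` are independent, Beta(γ_{s0},γ_{s1})
distributed up to level `n`, and Beta(α_{s0},α_{s1}) (the prior) beyond level `n`. -/
theorem stmt_10
    (a ℓ : List Bool → ℝ)
    (ha0 : a [] = 0) (hl0 : ℓ [] = 1)
    (hlpos : ∀ s, 0 < ℓ s)
    (haf : ∀ s, a (s ++ [false]) = a s)
    (hat : ∀ s, a (s ++ [true]) = a s + ℓ (s ++ [false]))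
    (hll : ∀ s, ℓ s = ℓ (s ++ [false]) + ℓ (s ++ [true]))
    (α : List Bool → ℝ) (hα : ∀ s, 0 ≤ α s)
    (hαsum : ∀ s, 0 < α (s ++ [false]) + α (s ++ [true]))
    (m : ℕ) (z : Fin m → ℝ) (hz : ∀ i, z i ∈ Set.Ico (0 : ℝ) 1)
    -- the posterior distribution of `(N, Y)` given the data, on a probability space:
    {Ω : Type*} [MeasurableSpace Ω] (μ : Measure Ω) [IsProbabilityMeasure μ]
    (N' : Ω → ℕ) (hN' : Measurable N')
    (post : ℕ → ℝ) (hpost : ∀ n, post n = (μ {ω | N' ω = n}).toReal)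
    (Y' : List Bool → Ω → ℝ) (hY'meas : ∀ s, Measurable (Y' s))
    (hY'range : ∀ s ω, Y' s ω ∈ Set.Icc (0 : ℝ) 1)
    (hY'sum : ∀ s ω, Y' (s ++ [true]) ω = 1 - Y' (s ++ [false]) ω)
    (hcondIndep : ∀ n, μ {ω | N' ω = n} ≠ 0 →
      iIndepFun (m := fun _ : List Bool => (inferInstance : MeasurableSpace ℝ))
        (fun s => Y' (s ++ [false])) (μ[|{ω | N' ω = n}]))
    (hcondBeta : ∀ n, μ {ω | N' ω = n} ≠ 0 → ∀ s : List Bool,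
      (μ[|{ω | N' ω = n}]).map (Y' (s ++ [false]))
        = if s.length < n then
            _root_.betaMeasure (α (s ++ [false]) + (cnt a ℓ z (s ++ [false]) : ℝ))
                        (α (s ++ [true]) + (cnt a ℓ z (s ++ [true]) : ℝ))
          else _root_.betaMeasure (α (s ++ [false])) (α (s ++ [true])))
    -- the point `x = .x_1x_2…` with digit sequence `y`:
    (x : ℝ) (hx : x ∈ Set.Ico (0 : ℝ) 1) (y : ℕ → Bool)
    (hdig : ∀ n, x ∈ Set.Ico (a (pre y n)) (a (pre y n) + ℓ (pre y n))) :
    ∫ ω, (∏ j ∈ Finset.range (N' ω), Y' (pre y (j + 1)) ω) / ℓ (pre y (N' ω)) ∂μ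
      = ∑' n, post n / ℓ (pre y n) *
          ∏ j ∈ Finset.range n,
            (α (pre y (j + 1)) + (cnt a ℓ z (pre y (j + 1)) : ℝ)) /
              ((α (pre y j ++ [false]) + (cnt a ℓ z (pre y j ++ [false]) : ℝ)) +
                (α (pre y j ++ [true]) + (cnt a ℓ z (pre y j ++ [true]) : ℝ))) := by
  classical
  have hms : ∀ n, MeasurableSet {ω | N' ω = n} := fun n => hN' (measurableSet_singleton n)
  have hγf : ∀ t, (0:ℝ) ≤ α t + (cnt a ℓ z t : ℝ) := fun t =>
    add_nonneg (hα t) (Nat.cast_nonneg _)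
  have hγpos : ∀ t : List Bool, (0:ℝ) <
      (α (t ++ [false]) + (cnt a ℓ z (t ++ [false]) : ℝ)) +
      (α (t ++ [true]) + (cnt a ℓ z (t ++ [true]) : ℝ)) := fun t => by
    have h1 := hαsum t
    have h2 : (0:ℝ) ≤ (cnt a ℓ z (t ++ [false]) : ℝ) := Nat.cast_nonneg _
    have h3 : (0:ℝ) ≤ (cnt a ℓ z (t ++ [true]) : ℝ) := Nat.cast_nonneg _
    linarith
  -- the per-level conditional means
  have key : ∀ n : ℕ,
      ∫ ω in {ω | N' ω = n}, (∏ j ∈ Finset.range n, Y' (pre y (j+1)) ω) / ℓ (pre y n) ∂μ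
        = post n / ℓ (pre y n) * ∏ j ∈ Finset.range n,
            (α (pre y (j + 1)) + (cnt a ℓ z (pre y (j + 1)) : ℝ)) /
              ((α (pre y j ++ [false]) + (cnt a ℓ z (pre y j ++ [false]) : ℝ)) +
                (α (pre y j ++ [true]) + (cnt a ℓ z (pre y j ++ [true]) : ℝ))) := by
    intro n
    by_cases hn : μ {ω | N' ω = n} = 0
    · rw [Measure.restrict_eq_zero.mpr hn]
      simp [hpost n, hn]
    · haveI hPν : IsProbabilityMeasure (μ[|{ω | N' ω = n}]) := cond_isProbabilityMeasure hn
      set ν := μ[|{ω | N' ω = n}] with hν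
      -- independence of the coordinates along the branch of x
      have hg : Function.Injective (fun j : ℕ => pre y j) := fun i j h => by
        have := congrArg List.length h
        simpa [pre_length] using this
      have hInd1 := iIndepFun_reindex (fun j : ℕ => pre y j) hg (hcondIndep n hn)
      have hInd3 : iIndepFun (m := fun _ : ℕ => (inferInstance : MeasurableSpace ℝ))
          (fun j (ω : Ω) => Y' (pre y (j+1)) ω) ν := by
        have hφm : ∀ j : ℕ, Measurable (fun t : ℝ => if y j then 1 - t else t) := fun j => by
          by_cases h : y j
          · simp only [h, if_true]; exact measurable_const.sub measurable_id
          · simp only [h, if_false]; exact measurable_id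
        have hInd2 := hInd1.comp (fun j (t : ℝ) => if y j then 1 - t else t) hφm
        convert hInd2 using 1
        funext j ω
        simp only [Function.comp]
        by_cases h : y j
        · rw [if_pos h, pre_succ y j, h, hY'sum]
        · rw [if_neg h, pre_succ y j, Bool.not_eq_true _ |>.mp h]
      have hYint : ∀ t, Integrable (Y' t) ν := fun t => by
        refine Integrable.mono' (integrable_const (1:ℝ)) (hY'meas t).aestronglyMeasurable
          (ae_of_all _ (fun ω => ?_))
        have h := hY'range t ω
        rw [Real.norm_eq_abs, abs_le]
        exact ⟨by linarith [h.1], h.2⟩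
      -- conditional means
      have hmean : ∀ j, j < n → ∫ ω, Y' (pre y (j+1)) ω ∂ν
          = (α (pre y (j + 1)) + (cnt a ℓ z (pre y (j + 1)) : ℝ)) /
              ((α (pre y j ++ [false]) + (cnt a ℓ z (pre y j ++ [false]) : ℝ)) +
                (α (pre y j ++ [true]) + (cnt a ℓ z (pre y j ++ [true]) : ℝ))) := by
        intro j hj
        have hmap := hcondBeta n hn (pre y j)
        rw [if_pos (by rw [pre_length]; exact hj)] at hmap
        have hmean0 : ∫ ω, Y' (pre y j ++ [false]) ω ∂ν
            = (α (pre y j ++ [false]) + (cnt a ℓ z (pre y j ++ [false]) : ℝ)) /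
              ((α (pre y j ++ [false]) + (cnt a ℓ z (pre y j ++ [false]) : ℝ)) +
                (α (pre y j ++ [true]) + (cnt a ℓ z (pre y j ++ [true]) : ℝ))) := by
          have h1 : ∫ ω, Y' (pre y j ++ [false]) ω ∂ν
              = ∫ t, t ∂(ν.map (Y' (pre y j ++ [false]))) :=
            (integral_map (hY'meas _).aemeasurable aestronglyMeasurable_id).symm
          rw [h1, hmap]
          exact betaMeasure_mean (hγf _) (hγf _) (hγpos _)
        by_cases h : y j
        · rw [pre_succ y j, h]
          have hrw : ∀ ω, Y' (pre y j ++ [true]) ω = 1 - Y' (pre y j ++ [false]) ω :=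
            fun ω => hY'sum _ ω
          calc ∫ ω, Y' (pre y j ++ [true]) ω ∂ν
              = ∫ ω, (1 - Y' (pre y j ++ [false]) ω) ∂ν := by
                exact integral_congr_ae (ae_of_all _ hrw)
            _ = 1 - ∫ ω, Y' (pre y j ++ [false]) ω ∂ν := by
                rw [integral_sub (integrable_const 1) (hYint _), integral_const]
                simp
            _ = _ := by
                rw [hmean0]
                have := (hγpos (pre y j)).ne'
                field_simp
                ring
        · rw [pre_succ y j, Bool.not_eq_true _ |>.mp h]
          exact hmean0
      -- expectation of the product under ν
      have hprod : ∫ ω, ∏ j ∈ Finset.range n, Y' (pre y (j+1)) ω ∂ν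
          = ∏ j ∈ Finset.range n, ∫ ω, Y' (pre y (j+1)) ω ∂ν :=
        integral_prod_of_iIndepFun (fun j => hY'meas _) hInd3 n
      -- relate the restricted integral to ν
      have hμfin : μ {ω | N' ω = n} ≠ ∞ := measure_ne_top μ _
      have hres : ∀ f : Ω → ℝ, ∫ ω in {ω | N' ω = n}, f ω ∂μ
          = (μ {ω | N' ω = n}).toReal * ∫ ω, f ω ∂ν := by
        intro f
        rw [hν, ProbabilityTheory.cond, integral_smul_measure, ENNReal.toReal_inv,
          smul_eq_mul, ← mul_assoc, mul_inv_cancel₀, one_mul]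
        exact ENNReal.toReal_ne_zero.mpr ⟨hn, hμfin⟩
      rw [hres, integral_div, hprod, Finset.prod_congr rfl (fun j hj => hmean j (Finset.mem_range.mp hj)),
        hpost n]
      ring
  -- nonnegativity and measurability of the integrand
  have hnn : ∀ (n : ℕ) (ω : Ω), 0 ≤ (∏ j ∈ Finset.range n, Y' (pre y (j+1)) ω) / ℓ (pre y n) :=
    fun n ω => div_nonneg (Finset.prod_nonneg (fun j _ => (hY'range _ ω).1)) (hlpos _).le
  have hub : ∀ (n : ℕ) (ω : Ω), (∏ j ∈ Finset.range n, Y' (pre y (j+1)) ω) / ℓ (pre y n)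
      ≤ 1 / ℓ (pre y n) := fun n ω => by
    have hp1 : (∏ j ∈ Finset.range n, Y' (pre y (j+1)) ω) ≤ 1 :=
      Finset.prod_le_one (fun j _ => (hY'range _ ω).1) (fun j _ => (hY'range _ ω).2)
    gcongr
    exact (hlpos _).le
  have hGm : ∀ n : ℕ, Measurable (fun ω => (∏ j ∈ Finset.range n, Y' (pre y (j+1)) ω) / ℓ (pre y n)) :=
    fun n => (Finset.measurable_prod _ (fun j _ => hY'meas _)).div_const _
  have hmain_m : Measurable (fun ω => (∏ j ∈ Finset.range (N' ω), Y' (pre y (j+1)) ω) / ℓ (pre y (N' ω))) := by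
    have hH : Measurable (fun p : Ω × ℕ =>
        (∏ j ∈ Finset.range p.2, Y' (pre y (j+1)) p.1) / ℓ (pre y p.2)) :=
      measurable_from_prod_countable_left (fun n => hGm n)
    exact hH.comp (measurable_id.prodMk hN')
  -- decompose the integral over the partition {N' = n}
  have hUnion : (⋃ n, {ω | N' ω = n}) = Set.univ := by
    ext ω; simp
  have hdisj : Pairwise (Function.onFun Disjoint (fun n => {ω | N' ω = n})) := by
    intro i j hij
    rw [Function.onFun, Set.disjoint_left]
    intro ω h1 h2
    exact hij (h1.symm.trans h2)
  rw [integral_eq_lintegral_of_nonneg_ae (ae_of_all μ (fun ω => hnn (N' ω) ω))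
    hmain_m.aestronglyMeasurable]
  rw [← setLIntegral_univ, ← hUnion, lintegral_iUnion hms hdisj]
  have hpiece : ∀ n : ℕ,
      ∫⁻ ω in {ω | N' ω = n}, ENNReal.ofReal
          ((∏ j ∈ Finset.range (N' ω), Y' (pre y (j+1)) ω) / ℓ (pre y (N' ω))) ∂μ
        = ENNReal.ofReal (∫ ω in {ω | N' ω = n},
            (∏ j ∈ Finset.range n, Y' (pre y (j+1)) ω) / ℓ (pre y n) ∂μ) := by
    intro n
    rw [setLIntegral_congr_fun (hms n) (fun ω hω => by
      have : N' ω = n := hω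
      rw [this])]
    rw [← ofReal_integral_eq_lintegral_ofReal ?_ (ae_of_all _ (fun ω => hnn n ω))]
    · refine Integrable.mono' (integrable_const (1 / ℓ (pre y n))) (hGm n).aestronglyMeasurable
        (ae_of_all _ (fun ω => ?_))
      rw [Real.norm_eq_abs, abs_of_nonneg (hnn n ω)]
      exact hub n ω
  simp_rw [hpiece]
  rw [ENNReal.tsum_toReal_eq (fun n => ENNReal.ofReal_ne_top)]
  refine tsum_congr (fun n => ?_)
  rw [ENNReal.toReal_ofReal (setIntegral_nonneg (hms n) (fun ω _ => hnn n ω))]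
  exact key n
end
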